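/- Let μ be a measure on (0,∞) and suppose there exist c > 0 and δ ∈ (0,1) such that μ(A) ≥ c·∫_A t^{−2}·(log(1/t))^{−2} dt for every measurable A ⊆ (0, δ]. Define φ(λ) := ∫_{(0,∞)} (1 − e^{−λt}) dμ(t) (with values in [0,∞]). Then there exist constants C > 0 and Λ > 1 such that φ(λ) ≥ C·λ/log λ for all λ ≥ Λ. -/

import Mathlib

open MeasureTheory ENNReal

lemma aux_half_le (x : ℝ) (hx0 : 0 ≤ x) (hx1 : x ≤ 1) : x / 2 ≤ 1 - Real.exp (-x) := by
  have h1 : x + 1 ≤ Real.exp x := Real.add_one_le_exp x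
  have hx2 : Real.exp (-x) ≤ (1 + x)⁻¹ := by
    rw [Real.exp_neg]
    exact inv_anti₀ (by linarith) (by linarith)
  have hu : (1 + x) * (1 + x)⁻¹ = 1 := mul_inv_cancel₀ (by linarith)
  nlinarith [inv_nonneg.2 (show (0:ℝ) ≤ 1 + x by linarith)]

lemma aux_ftc (b a : ℝ) (hb0 : 0 < b) (hba : b ≤ a) (ha1 : a < 1) :
    ∫ t in b..a, (t * Real.log t ^ 2)⁻¹ = -(Real.log a)⁻¹ - -(Real.log b)⁻¹ := by
  have key : ∀ t ∈ Set.uIcc b a, HasDerivAt (fun t => -(Real.log t)⁻¹) ((t * Real.log t ^ 2)⁻¹) t := by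
    intro t ht
    rw [Set.uIcc_of_le hba] at ht
    have ht0 : 0 < t := lt_of_lt_of_le hb0 ht.1
    have ht1 : t < 1 := lt_of_le_of_lt ht.2 ha1
    have hlt : Real.log t ≠ 0 := ne_of_lt (Real.log_neg ht0 ht1)
    have h := ((Real.hasDerivAt_log (ne_of_gt ht0)).inv hlt).neg
    exact h.congr_deriv (by simp only [neg_div, neg_mul, neg_neg, div_eq_mul_inv, mul_inv])
  have hcont : ContinuousOn (fun t => (t * Real.log t ^ 2)⁻¹) (Set.uIcc b a) := by
    rw [Set.uIcc_of_le hba]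
    apply ContinuousOn.inv₀
    · exact (continuousOn_id.mul ((Real.continuousOn_log.mono (fun t ht => by
        simp only [Set.mem_compl_iff, Set.mem_singleton_iff]
        exact ne_of_gt (lt_of_lt_of_le hb0 ht.1))).pow 2))
    · intro t ht
      have ht0 : 0 < t := lt_of_lt_of_le hb0 ht.1
      have ht1 : t < 1 := lt_of_le_of_lt ht.2 ha1
      have hlt : Real.log t ≠ 0 := ne_of_lt (Real.log_neg ht0 ht1)
      positivity
  rw [intervalIntegral.integral_eq_sub_of_hasDerivAt key hcont.intervalIntegrable]

theorem stmt12 (μ : Measure ℝ) (c δ : ℝ) (hc : 0 < c) (hδ0 : 0 < δ) (hδ1 : δ < 1)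
    (hlow : ∀ A : Set ℝ, MeasurableSet A → A ⊆ Set.Ioc 0 δ →
      ENNReal.ofReal c *
          (∫⁻ t in A, ENNReal.ofReal ((t ^ 2 * Real.log (1 / t) ^ 2)⁻¹)) ≤ μ A) :
    ∃ C Λ : ℝ, 0 < C ∧ 1 < Λ ∧ ∀ l : ℝ, Λ ≤ l →
      ENNReal.ofReal (C * l / Real.log l) ≤
        ∫⁻ t in Set.Ioi (0 : ℝ), ENNReal.ofReal (1 - Real.exp (-(l * t))) ∂μ := by
  refine ⟨c / 4, max 2 δ⁻¹, by positivity, lt_of_lt_of_le one_lt_two (le_max_left _ _), ?_⟩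
  intro l hl
  have hl2 : (2:ℝ) ≤ l := le_trans (le_max_left _ _) hl
  have hl1 : (1:ℝ) < l := by linarith
  have hl0 : (0:ℝ) < l := by linarith
  have hδl : δ⁻¹ ≤ l := le_trans (le_max_right _ _) hl
  have hlog : 0 < Real.log l := Real.log_pos hl1
  set a : ℝ := l⁻¹ with ha
  set b : ℝ := (l ^ 2)⁻¹ with hb
  have hb0 : 0 < b := by positivity
  have hba : b < a := by
    apply inv_strictAnti₀ hl0
    nlinarith
  have ha1 : a < 1 := by
    rw [ha]; exact inv_lt_one_of_one_lt₀ hl1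
  have haδ : a ≤ δ := by
    rw [ha, inv_le_comm₀ hl0 hδ0]
    exact hδl
  set S : Set ℝ := Set.Ioc b a with hS
  have hSm : MeasurableSet S := measurableSet_Ioc
  have hSsub : S ⊆ Set.Ioc 0 δ := fun t ht => ⟨lt_trans hb0 ht.1, le_trans ht.2 haδ⟩
  set g : ℝ → ℝ≥0∞ := fun t => ENNReal.ofReal ((t ^ 2 * Real.log (1 / t) ^ 2)⁻¹) with hg
  have hgm : Measurable g := by
    apply ENNReal.measurable_ofReal.comp
    apply Measurable.inv
    exact ((measurable_id.pow_const 2).mul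
      ((Real.measurable_log.comp (measurable_const.div measurable_id)).pow_const 2))
  set f : ℝ → ℝ≥0∞ := fun t => ENNReal.ofReal (1 - Real.exp (-(l * t))) with hf
  have hfm : Measurable f :=
    ENNReal.measurable_ofReal.comp
      ((measurable_const.sub ((measurable_const.mul measurable_id).neg.exp)))
  set ν : Measure ℝ := ENNReal.ofReal c • (volume.withDensity g) with hν
  -- measure comparison on S
  have hνμ : ν.restrict S ≤ μ.restrict S := by
    refine Measure.le_iff.2 fun B hB => ?_
    rw [Measure.restrict_apply hB, Measure.restrict_apply hB]
    have hBS : MeasurableSet (B ∩ S) := hB.inter hSm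
    have h1 := hlow (B ∩ S) hBS (fun t ht => hSsub ht.2)
    calc ν (B ∩ S) = ENNReal.ofReal c * ∫⁻ t in B ∩ S, g t := by
          rw [hν, Measure.smul_apply, smul_eq_mul, withDensity_apply _ hBS]
      _ ≤ μ (B ∩ S) := h1
  -- real integral computation
  have hreal : ∫ t in b..a, (t * Real.log t ^ 2)⁻¹ = (2 * Real.log l)⁻¹ := by
    rw [aux_ftc b a hb0 hba.le ha1]
    rw [ha, hb, Real.log_inv, Real.log_inv, Real.log_pow]
    push_cast
    field_simp
    ring
  -- lintegral of the lower bound over S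
  have hlint : ∫⁻ t in S, ENNReal.ofReal ((t * Real.log t ^ 2)⁻¹) =
      ENNReal.ofReal ((2 * Real.log l)⁻¹) := by
    rw [← hreal, intervalIntegral.integral_of_le hba.le]
    rw [← ofReal_integral_eq_lintegral_ofReal]
    · have : IntegrableOn (fun t => (t * Real.log t ^ 2)⁻¹) (Set.Icc b a) := by
        apply ContinuousOn.integrableOn_Icc
        have := (aux_ftc b a hb0 hba.le ha1)
        -- reuse continuity proof inline
        apply ContinuousOn.inv₀
        · exact (continuousOn_id.mul ((Real.continuousOn_log.mono (fun t ht => by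
            simp only [Set.mem_compl_iff, Set.mem_singleton_iff]
            exact ne_of_gt (lt_of_lt_of_le hb0 ht.1))).pow 2))
        · intro t ht
          have ht0 : 0 < t := lt_of_lt_of_le hb0 ht.1
          have ht1 : t < 1 := lt_of_le_of_lt ht.2 ha1
          have hlt : Real.log t ≠ 0 := ne_of_lt (Real.log_neg ht0 ht1)
          positivity
      exact this.mono_set Set.Ioc_subset_Icc_self
    · filter_upwards [self_mem_ae_restrict hSm] with t ht
      have ht0 : 0 < t := lt_trans hb0 ht.1
      positivity
  -- pointwise bound on S
  have hpt : ∀ t ∈ S, ENNReal.ofReal (l / 2) * ENNReal.ofReal ((t * Real.log t ^ 2)⁻¹)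
      ≤ g t * f t := by
    intro t ht
    have ht0 : 0 < t := lt_trans hb0 ht.1
    have ht1 : t < 1 := lt_of_le_of_lt ht.2 ha1
    have hlt : Real.log t < 0 := Real.log_neg ht0 ht1
    have hlog2 : Real.log (1 / t) ^ 2 = Real.log t ^ 2 := by
      rw [one_div, Real.log_inv]; ring
    have hgt0 : (0:ℝ) < t ^ 2 * Real.log t ^ 2 :=
      mul_pos (pow_pos ht0 2) (by nlinarith)
    have hxle : l * t ≤ 1 := by
      have := ht.2
      rw [ha] at this
      calc l * t ≤ l * l⁻¹ := by nlinarith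
        _ = 1 := mul_inv_cancel₀ (ne_of_gt hl0)
    have hexp : l * t / 2 ≤ 1 - Real.exp (-(l * t)) :=
      aux_half_le (l * t) (by positivity) hxle
    show ENNReal.ofReal (l / 2) * ENNReal.ofReal ((t * Real.log t ^ 2)⁻¹) ≤
      ENNReal.ofReal ((t ^ 2 * Real.log (1 / t) ^ 2)⁻¹) * ENNReal.ofReal (1 - Real.exp (-(l * t)))
    rw [hlog2, ← ENNReal.ofReal_mul (by positivity), ← ENNReal.ofReal_mul (by positivity)]
    apply ENNReal.ofReal_le_ofReal
    have heq : l / 2 * (t * Real.log t ^ 2)⁻¹ = (t ^ 2 * Real.log t ^ 2)⁻¹ * (l * t / 2) := by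
      field_simp [ht0.ne', hlt.ne]
    rw [heq]
    apply mul_le_mul_of_nonneg_left hexp (by positivity)
  -- main chain
  calc ENNReal.ofReal (c / 4 * l / Real.log l)
      = ENNReal.ofReal c * (ENNReal.ofReal (l / 2) * ENNReal.ofReal ((2 * Real.log l)⁻¹)) := by
        rw [← ENNReal.ofReal_mul (by positivity), ← ENNReal.ofReal_mul (by positivity)]
        congr 1
        field_simp
        ring
    _ = ENNReal.ofReal c * ∫⁻ t in S,
          ENNReal.ofReal (l / 2) * ENNReal.ofReal ((t * Real.log t ^ 2)⁻¹) := by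
        rw [lintegral_const_mul' _ _ ENNReal.ofReal_ne_top, hlint]
    _ ≤ ENNReal.ofReal c * ∫⁻ t in S, g t * f t := by
        apply mul_le_mul_right
        apply lintegral_mono_ae
        filter_upwards [self_mem_ae_restrict hSm] with t ht
        exact hpt t ht
    _ = ∫⁻ t in S, f t ∂ν := by
        rw [hν, Measure.restrict_smul, lintegral_smul_measure, restrict_withDensity hSm,
          lintegral_withDensity_eq_lintegral_mul _ hgm hfm]
        rfl
    _ ≤ ∫⁻ t in S, f t ∂μ := lintegral_mono' hνμ le_rfl
    _ ≤ ∫⁻ t in Set.Ioi (0:ℝ), f t ∂μ := by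
        apply lintegral_mono_set
        exact fun t ht => lt_trans hb0 ht.1
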